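/- Let ψ ∈ H_n be a state whose stabilizer in G = SL(2,ℂ)^{⊗n} is a finite set. If X₁,…,Xₙ are traceless complex 2×2 matrices such that Σ_{k=1}^{n} (I⊗⋯⊗Xₖ⊗⋯⊗I)ψ = 0 (where Xₖ is placed at tensor slot k and the identity acts on all other slots), then Xₖ = 0 for every k. -/

import Mathlib

open scoped BigOperators Matrix
open MeasureTheory

noncomputable section

/-- The Hilbert space of `n` qubits, identified with `ℂ^(2^n)` via the computational basis:
states are functions on bit strings. -/
abbrev QubitState (n : ℕ) := (Fin n → Fin 2) → ℂ

/-- Action of the product operator `g 0 ⊗ ⋯ ⊗ g (n-1)` on an `n`-qubit state,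
in the computational basis. -/
def prodOp {n : ℕ} (g : Fin n → Matrix (Fin 2) (Fin 2) ℂ) (ψ : QubitState n) : QubitState n :=
  fun x => ∑ y : Fin n → Fin 2, (∏ i, g i (x i) (y i)) * ψ y

namespace StabAux

open NormedSpace Finset Function
open scoped Nat

variable {n : ℕ}

/-- A continuous function on `ℂ` with finite range is constant. -/
lemma const_of_finite_range {E : Type*} [TopologicalSpace E] [T2Space E]
    {f : ℂ → E} (hf : Continuous f) {S : Set E} (hS : S.Finite)
    (hr : ∀ t, f t ∈ S) (t : ℂ) : f t = f 0 := by
  have hclosed : IsClosed {u : ℂ | f u = f 0} := isClosed_eq hf continuous_const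
  have hopen : IsOpen {u : ℂ | f u = f 0} := by
    have hc : {u : ℂ | f u = f 0}ᶜ = f ⁻¹' (S \ {f 0}) := by
      ext u
      simp only [Set.mem_compl_iff, Set.mem_setOf_eq, Set.mem_preimage, Set.mem_diff,
        Set.mem_singleton_iff]
      exact ⟨fun h => ⟨hr u, h⟩, fun h => h.2⟩
    rw [← isClosed_compl_iff, hc]
    exact ((hS.subset Set.diff_subset).isClosed).preimage hf
  have huniv : {u : ℂ | f u = f 0} = Set.univ :=
    IsClopen.eq_univ ⟨hclosed, hopen⟩ ⟨0, rfl⟩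
  exact Set.eq_univ_iff_forall.mp huniv t

/-- Matrix of the product operator. -/
def Mg (g : Fin n → Matrix (Fin 2) (Fin 2) ℂ) :
    Matrix (Fin n → Fin 2) (Fin n → Fin 2) ℂ :=
  Matrix.of fun x y => ∏ i, g i (x i) (y i)

lemma prodOp_eq (g : Fin n → Matrix (Fin 2) (Fin 2) ℂ) (ψ : QubitState n) :
    prodOp g ψ = (Mg g).mulVec ψ := rfl

lemma Mg_mul (g h : Fin n → Matrix (Fin 2) (Fin 2) ℂ) : Mg (g * h) = Mg g * Mg h := by
  ext x z
  rw [Matrix.mul_apply]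
  have h1 : Mg (g * h) x z = ∏ i, ∑ b : Fin 2, g i (x i) b * h i b (z i) := by
    show (∏ i, (g i * h i) (x i) (z i)) = _
    exact Finset.prod_congr rfl fun i _ => Matrix.mul_apply
  rw [h1, Finset.prod_univ_sum, Fintype.piFinset_univ]
  refine Finset.sum_congr rfl fun y _ => ?_
  show (∏ i, g i (x i) (y i) * h i (y i) (z i)) = Mg g x y * Mg h y z
  exact Finset.prod_mul_distrib

lemma Mg_one : Mg (1 : Fin n → Matrix (Fin 2) (Fin 2) ℂ) = 1 := by
  ext x y
  show (∏ i, (1 : Matrix (Fin 2) (Fin 2) ℂ) (x i) (y i)) = (1 : Matrix _ _ ℂ) x y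
  by_cases hxy : x = y
  · subst hxy
    simp [Matrix.one_apply]
  · obtain ⟨i, hi⟩ := Function.ne_iff.mp hxy
    rw [Matrix.one_apply_ne hxy]
    exact Finset.prod_eq_zero (Finset.mem_univ i) (Matrix.one_apply_ne hi)

lemma Mg_update_apply (k : Fin n) (M : Matrix (Fin 2) (Fin 2) ℂ) (x y : Fin n → Fin 2) :
    Mg (Function.update (1 : Fin n → Matrix (Fin 2) (Fin 2) ℂ) k M) x y
      = M (x k) (y k) * ∏ i ∈ Finset.univ.erase k,
          (1 : Matrix (Fin 2) (Fin 2) ℂ) (x i) (y i) := by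
  show (∏ i, (Function.update (1 : Fin n → Matrix (Fin 2) (Fin 2) ℂ) k M) i (x i) (y i)) = _
  rw [← Finset.mul_prod_erase Finset.univ _ (Finset.mem_univ k)]
  congr 1
  · rw [Function.update_self]
  · refine Finset.prod_congr rfl fun i hi => ?_
    rw [Function.update_of_ne (Finset.mem_erase.mp hi).1]
    rfl

lemma update_one_one (k : Fin n) :
    Function.update (1 : Fin n → Matrix (Fin 2) (Fin 2) ℂ) k 1 = 1 := by
  funext i
  show Function.update (1 : Fin n → Matrix (Fin 2) (Fin 2) ℂ) k 1 i
    = (1 : Fin n → Matrix (Fin 2) (Fin 2) ℂ) i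
  by_cases h : i = k
  · subst h
    rw [Function.update_self]
    rfl
  · rw [Function.update_of_ne h]

lemma update_mul_update (k : Fin n) (M N : Matrix (Fin 2) (Fin 2) ℂ) :
    Function.update (1 : Fin n → Matrix (Fin 2) (Fin 2) ℂ) k M *
      Function.update (1 : Fin n → Matrix (Fin 2) (Fin 2) ℂ) k N
      = Function.update (1 : Fin n → Matrix (Fin 2) (Fin 2) ℂ) k (M * N) := by
  funext i
  show Function.update (1 : Fin n → Matrix (Fin 2) (Fin 2) ℂ) k M i *
      Function.update (1 : Fin n → Matrix (Fin 2) (Fin 2) ℂ) k N i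
    = Function.update (1 : Fin n → Matrix (Fin 2) (Fin 2) ℂ) k (M * N) i
  by_cases h : i = k
  · subst h
    rw [Function.update_self, Function.update_self, Function.update_self]
  · rw [Function.update_of_ne h, Function.update_of_ne h, Function.update_of_ne h]
    exact one_mul _

/-- The algebra homomorphism embedding a one-qubit operator at slot `k`. -/
def phi (k : Fin n) :
    Matrix (Fin 2) (Fin 2) ℂ →ₐ[ℂ] Matrix (Fin n → Fin 2) (Fin n → Fin 2) ℂ where
  toFun M := Mg (Function.update (1 : Fin n → Matrix (Fin 2) (Fin 2) ℂ) k M)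
  map_one' := by
    show Mg (Function.update (1 : Fin n → Matrix (Fin 2) (Fin 2) ℂ) k 1) = 1
    rw [update_one_one, Mg_one]
  map_mul' M N := by
    show Mg (Function.update (1 : Fin n → Matrix (Fin 2) (Fin 2) ℂ) k (M * N))
      = Mg (Function.update (1 : Fin n → Matrix (Fin 2) (Fin 2) ℂ) k M) *
        Mg (Function.update (1 : Fin n → Matrix (Fin 2) (Fin 2) ℂ) k N)
    rw [← update_mul_update, Mg_mul]
  map_zero' := by
    show Mg (Function.update (1 : Fin n → Matrix (Fin 2) (Fin 2) ℂ) k 0) = 0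
    ext x y
    simp [Mg_update_apply]
  map_add' M N := by
    show Mg (Function.update (1 : Fin n → Matrix (Fin 2) (Fin 2) ℂ) k (M + N))
      = Mg (Function.update (1 : Fin n → Matrix (Fin 2) (Fin 2) ℂ) k M) +
        Mg (Function.update (1 : Fin n → Matrix (Fin 2) (Fin 2) ℂ) k N)
    ext x y
    simp [Mg_update_apply, add_mul]
  commutes' c := by
    show Mg (Function.update (1 : Fin n → Matrix (Fin 2) (Fin 2) ℂ) k
        (algebraMap ℂ (Matrix (Fin 2) (Fin 2) ℂ) c)) = _
    have h1 : (1 : Matrix (Fin n → Fin 2) (Fin n → Fin 2) ℂ)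
        = Mg (Function.update (1 : Fin n → Matrix (Fin 2) (Fin 2) ℂ) k 1) := by
      rw [update_one_one, Mg_one]
    rw [Algebra.algebraMap_eq_smul_one, Algebra.algebraMap_eq_smul_one, h1]
    ext x y
    rw [Matrix.smul_apply, Mg_update_apply, Mg_update_apply, Matrix.smul_apply, smul_eq_mul,
      smul_eq_mul, mul_assoc]

lemma phi_apply (k : Fin n) (M : Matrix (Fin 2) (Fin 2) ℂ) :
    phi k M = Mg (Function.update 1 k M) := rfl

lemma phi_continuous (k : Fin n) : Continuous (phi k) := by
  letI : NormedRing (Matrix (Fin 2) (Fin 2) ℂ) := Matrix.linftyOpNormedRing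
  letI : NormedAlgebra ℂ (Matrix (Fin 2) (Fin 2) ℂ) := Matrix.linftyOpNormedAlgebra
  letI : NormedRing (Matrix (Fin n → Fin 2) (Fin n → Fin 2) ℂ) := Matrix.linftyOpNormedRing
  letI : NormedAlgebra ℂ (Matrix (Fin n → Fin 2) (Fin n → Fin 2) ℂ) :=
    Matrix.linftyOpNormedAlgebra
  exact (phi k).toLinearMap.continuous_of_finiteDimensional

lemma phi_commute {j k : Fin n} (hjk : j ≠ k) (M N : Matrix (Fin 2) (Fin 2) ℂ) :
    Commute (phi j M) (phi k N) := by
  have hupd : Function.update (1 : Fin n → Matrix (Fin 2) (Fin 2) ℂ) j M *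
      Function.update (1 : Fin n → Matrix (Fin 2) (Fin 2) ℂ) k N
      = Function.update (1 : Fin n → Matrix (Fin 2) (Fin 2) ℂ) k N *
        Function.update (1 : Fin n → Matrix (Fin 2) (Fin 2) ℂ) j M := by
    funext i
    show Function.update (1 : Fin n → Matrix (Fin 2) (Fin 2) ℂ) j M i *
        Function.update (1 : Fin n → Matrix (Fin 2) (Fin 2) ℂ) k N i
      = Function.update (1 : Fin n → Matrix (Fin 2) (Fin 2) ℂ) k N i *
        Function.update (1 : Fin n → Matrix (Fin 2) (Fin 2) ℂ) j M i
    by_cases hj : i = j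
    · subst hj
      rw [Function.update_of_ne hjk, Function.update_self]
      show _ * (1 : Matrix (Fin 2) (Fin 2) ℂ) = (1 : Matrix (Fin 2) (Fin 2) ℂ) * _
      rw [mul_one, one_mul]
    · rw [Function.update_of_ne hj]
      by_cases hk : i = k
      · subst hk
        rw [Function.update_self]
        show (1 : Matrix (Fin 2) (Fin 2) ℂ) * _ = _ * (1 : Matrix (Fin 2) (Fin 2) ℂ)
        rw [mul_one, one_mul]
      · rw [Function.update_of_ne hk]
  show phi j M * phi k N = phi k N * phi j M
  rw [phi_apply, phi_apply, ← Mg_mul, ← Mg_mul, hupd]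

/-- `exp` of a matrix annihilating `ψ` fixes `ψ`. -/
lemma exp_mulVec_of_mulVec_zero {N : Type*} [Fintype N] [DecidableEq N]
    (B : Matrix N N ℂ) (ψ : N → ℂ) (hB : B.mulVec ψ = 0) :
    (exp B).mulVec ψ = ψ := by
  letI : NormedRing (Matrix N N ℂ) := Matrix.linftyOpNormedRing
  letI : NormedAlgebra ℂ (Matrix N N ℂ) := Matrix.linftyOpNormedAlgebra
  let L : Matrix N N ℂ →ₗ[ℂ] (N → ℂ) :=
    { toFun := fun M => M.mulVec ψ
      map_add' := fun M N => Matrix.add_mulVec M N ψ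
      map_smul' := fun c M => Matrix.smul_mulVec c M ψ }
  let Lc : Matrix N N ℂ →L[ℂ] (N → ℂ) :=
    ⟨L, L.continuous_of_finiteDimensional⟩
  have hL : ∀ M : Matrix N N ℂ, Lc M = M.mulVec ψ := fun _ => rfl
  have hpow : ∀ m : ℕ, m ≠ 0 → (B ^ m).mulVec ψ = 0 := by
    intro m hm
    obtain ⟨m', rfl⟩ := Nat.exists_eq_succ_of_ne_zero hm
    rw [pow_succ, ← Matrix.mulVec_mulVec, hB, Matrix.mulVec_zero]
  have hexp : exp B = ∑' m : ℕ, (m !⁻¹ : ℂ) • B ^ m := congrFun (exp_eq_tsum ℂ) B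
  calc (exp B).mulVec ψ = Lc (∑' m : ℕ, (m !⁻¹ : ℂ) • B ^ m) := by rw [← hexp, hL]
    _ = ∑' m : ℕ, Lc ((m !⁻¹ : ℂ) • B ^ m) := Lc.map_tsum (expSeries_summable' B)
    _ = ψ := by
        rw [tsum_eq_single 0 ?_]
        · rw [_root_.map_smul, hL, pow_zero, Matrix.one_mulVec]
          simp
        · intro m hm
          rw [_root_.map_smul, hL, hpow m hm, smul_zero]

/-- Key identity: the product operator built from `exp (t • X i)` on a set `s` of slots is
the exponential of the sum of the one-site generators. -/
lemma Mg_if_exp (t : ℂ) (X : Fin n → Matrix (Fin 2) (Fin 2) ℂ) (s : Finset (Fin n)) :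
    Mg (fun i => if i ∈ s then exp (t • X i) else 1)
      = exp (∑ k ∈ s, t • (phi k (X k) : Matrix (Fin n → Fin 2) (Fin n → Fin 2) ℂ)) := by
  classical
  letI : NormedRing (Matrix (Fin 2) (Fin 2) ℂ) := Matrix.linftyOpNormedRing
  letI : NormedAlgebra ℂ (Matrix (Fin 2) (Fin 2) ℂ) := Matrix.linftyOpNormedAlgebra
  letI : NormedRing (Matrix (Fin n → Fin 2) (Fin n → Fin 2) ℂ) := Matrix.linftyOpNormedRing
  letI : NormedAlgebra ℂ (Matrix (Fin n → Fin 2) (Fin n → Fin 2) ℂ) :=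
    Matrix.linftyOpNormedAlgebra
  letI : NormedAlgebra ℚ (Matrix (Fin 2) (Fin 2) ℂ) :=
    NormedAlgebra.restrictScalars ℚ ℂ (Matrix (Fin 2) (Fin 2) ℂ)
  letI : NormedAlgebra ℚ (Matrix (Fin n → Fin 2) (Fin n → Fin 2) ℂ) :=
    NormedAlgebra.restrictScalars ℚ ℂ (Matrix (Fin n → Fin 2) (Fin n → Fin 2) ℂ)
  induction s using Finset.induction with
  | empty =>
      have h0 : (fun i : Fin n => if i ∈ (∅ : Finset (Fin n)) then exp (t • X i) else 1)
          = (1 : Fin n → Matrix (Fin 2) (Fin 2) ℂ) := by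
        funext i
        rw [if_neg (Finset.notMem_empty i)]
        rfl
      rw [h0, Mg_one, Finset.sum_empty, exp_zero]
  | @insert a s ha ih =>
      have hsplit : (fun i => if i ∈ insert a s then exp (t • X i) else 1)
          = Function.update (1 : Fin n → Matrix (Fin 2) (Fin 2) ℂ) a (exp (t • X a)) *
            (fun i => if i ∈ s then exp (t • X i) else 1) := by
        funext i
        by_cases h : i = a
        · subst h
          simp [ha]
        · simp [Function.update_of_ne h, Finset.mem_insert, h]
      have h1 : Mg (Function.update (1 : Fin n → Matrix (Fin 2) (Fin 2) ℂ) a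
            (exp (t • X a))) = exp (t • (phi a (X a))) := by
        have hm := map_exp (phi a) (phi_continuous a) (t • X a)
        rw [phi_apply] at hm
        rw [_root_.map_smul] at hm
        exact hm
      have hcomm : Commute (t • (phi a (X a) : Matrix (Fin n → Fin 2) (Fin n → Fin 2) ℂ))
          (∑ k ∈ s, t • (phi k (X k) : Matrix (Fin n → Fin 2) (Fin n → Fin 2) ℂ)) := by
        refine Commute.sum_right _ _ _ fun k hk => ?_
        have : a ≠ k := fun h => ha (h ▸ hk)
        exact ((phi_commute this (X a) (X k)).smul_left t).smul_right t
      rw [hsplit, Mg_mul, h1, ih, ← Matrix.exp_add_of_commute _ _ hcomm,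
        Finset.sum_insert ha]

/-- The conjugation matrix implementing `B ↦ -Bᵀ` on traceless matrices. -/
def J : Matrix (Fin 2) (Fin 2) ℂ := !![0, 1; -1, 0]

lemma det_J : J.det = 1 := by
  rw [J, Matrix.det_fin_two_of]; ring

lemma isUnit_J : IsUnit J := by
  rw [Matrix.isUnit_iff_isUnit_det, det_J]; exact isUnit_one

lemma J_conj (B : Matrix (Fin 2) (Fin 2) ℂ) (hB : B.trace = 0) :
    J * B * J⁻¹ = -Bᵀ := by
  have htr : B 0 0 + B 1 1 = 0 := by rwa [Matrix.trace_fin_two] at hB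
  have key : J * B = -Bᵀ * J := by
    ext i j
    fin_cases i <;> fin_cases j <;>
      simp [J, Matrix.mul_apply, Fin.sum_univ_two] <;>
      first
        | exact eq_neg_of_add_eq_zero_right htr
        | exact (eq_neg_of_add_eq_zero_right htr).symm
  calc J * B * J⁻¹ = -Bᵀ * J * J⁻¹ := by rw [key]
    _ = -Bᵀ * (J * J⁻¹) := by rw [Matrix.mul_assoc]
    _ = -Bᵀ := by rw [Matrix.mul_nonsing_inv J (by rw [det_J]; exact isUnit_one), Matrix.mul_one]

lemma det_exp_sq (B : Matrix (Fin 2) (Fin 2) ℂ) (hB : B.trace = 0) :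
    (exp B).det ^ 2 = 1 := by
  have h1 : (exp B).det * (exp (-B)).det = 1 := by
    rw [← Matrix.det_mul, ← Matrix.exp_add_of_commute B (-B) (Commute.refl B).neg_right,
      add_neg_cancel, exp_zero, Matrix.det_one]
  have h2 : (exp (-B)).det = (exp B).det := by
    have hBt : -B = (-Bᵀ)ᵀ := by rw [Matrix.transpose_neg, Matrix.transpose_transpose]
    calc (exp (-B)).det = (exp ((-Bᵀ)ᵀ)).det := by rw [← hBt]
      _ = ((exp (-Bᵀ))ᵀ).det := by rw [Matrix.exp_transpose]
      _ = (exp (-Bᵀ)).det := Matrix.det_transpose _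
      _ = (exp (J * B * J⁻¹)).det := by rw [J_conj B hB]
      _ = (J * exp B * J⁻¹).det := by rw [Matrix.exp_conj J B isUnit_J]
      _ = (exp B).det := by
          rw [Matrix.det_mul, Matrix.det_mul, mul_comm, ← mul_assoc, ← Matrix.det_mul,
            Matrix.nonsing_inv_mul J (by rw [det_J]; exact isUnit_one), Matrix.det_one, one_mul]
  calc (exp B).det ^ 2 = (exp B).det * (exp (-B)).det := by rw [sq, h2]
    _ = 1 := h1

lemma det_exp_eq_one (Y : Matrix (Fin 2) (Fin 2) ℂ) (hY : Y.trace = 0) (t : ℂ) :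
    (exp (t • Y)).det = 1 := by
  letI : NormedRing (Matrix (Fin 2) (Fin 2) ℂ) := Matrix.linftyOpNormedRing
  letI : NormedAlgebra ℂ (Matrix (Fin 2) (Fin 2) ℂ) := Matrix.linftyOpNormedAlgebra
  letI : NormedAlgebra ℚ (Matrix (Fin 2) (Fin 2) ℂ) :=
    NormedAlgebra.restrictScalars ℚ ℂ (Matrix (Fin 2) (Fin 2) ℂ)
  have hcont : Continuous fun u : ℂ => (exp (u • Y)).det :=
    Continuous.matrix_det ((exp_continuous).comp (continuous_id.smul continuous_const))
  have hrange : ∀ u : ℂ, (exp (u • Y)).det ∈ ({1, -1} : Set ℂ) := by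
    intro u
    have htr : (u • Y).trace = 0 := by rw [Matrix.trace_smul, hY, smul_zero]
    have hsq := det_exp_sq (u • Y) htr
    have hfact : ((exp (u • Y)).det - 1) * ((exp (u • Y)).det + 1) = 0 := by
      linear_combination hsq
    simp only [Set.mem_insert_iff, Set.mem_singleton_iff]
    rcases mul_eq_zero.mp hfact with h | h
    · exact Or.inl (sub_eq_zero.mp h)
    · exact Or.inr (eq_neg_of_add_eq_zero_left h)
  have hconst := const_of_finite_range hcont
    ((Set.finite_singleton (-1 : ℂ)).insert 1) hrange t
  rw [hconst, zero_smul, exp_zero, Matrix.det_one]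

end StabAux

/-- If the stabilizer of `ψ` in `G = SL(2,ℂ)^{⊗n}` is finite and `X₁, …, Xₙ` are traceless
`2×2` matrices with `Σₖ (I ⊗ ⋯ ⊗ Xₖ ⊗ ⋯ ⊗ I) ψ = 0` (with `Xₖ` at slot `k`), then all
`Xₖ` vanish. -/
theorem finite_stabilizer_trivial_lie_algebra (n : ℕ) (ψ : QubitState n)
    (hfin : {g : Fin n → Matrix (Fin 2) (Fin 2) ℂ |
      (∀ i, (g i).det = 1) ∧ prodOp g ψ = ψ}.Finite)
    (X : Fin n → Matrix (Fin 2) (Fin 2) ℂ) (htr : ∀ k, (X k).trace = 0)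
    (h : ∑ k : Fin n,
      prodOp (Function.update (fun _ => (1 : Matrix (Fin 2) (Fin 2) ℂ)) k (X k)) ψ
        = 0) :
    ∀ k, X k = 0 := by
  classical
  open NormedSpace StabAux in
  -- the total generator
  set A : Matrix (Fin n → Fin 2) (Fin n → Fin 2) ℂ := ∑ j, (phi j (X j)) with hA
  have hker : A.mulVec ψ = 0 := by
    have hterm : ∀ j : Fin n,
        prodOp (Function.update (fun _ => (1 : Matrix (Fin 2) (Fin 2) ℂ)) j (X j)) ψ
          = (phi j (X j)).mulVec ψ := fun j => rfl
    have hsum : A.mulVec ψ = ∑ j, (phi j (X j)).mulVec ψ := by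
      funext x
      rw [hA]
      simp only [Matrix.mulVec, dotProduct, Matrix.sum_apply, Finset.sum_apply,
        Finset.sum_mul]
      rw [Finset.sum_comm]
    rw [hsum, ← h]
    exact (Finset.sum_congr rfl fun j _ => (hterm j).symm)
  -- membership of the exponential curve in the stabilizer
  have hmem : ∀ t : ℂ, (fun i => exp (t • X i)) ∈
      {g : Fin n → Matrix (Fin 2) (Fin 2) ℂ | (∀ i, (g i).det = 1) ∧ prodOp g ψ = ψ} := by
    intro t
    constructor
    · intro i
      exact det_exp_eq_one (X i) (htr i) t
    · have hMg : Mg (fun i => exp (t • X i)) = exp (t • A) := by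
        have := Mg_if_exp t X Finset.univ
        simp only [Finset.mem_univ, if_true] at this
        rw [this, hA, Finset.smul_sum]
      rw [prodOp_eq, hMg]
      apply exp_mulVec_of_mulVec_zero
      rw [Matrix.smul_mulVec, hker, smul_zero]
  -- conclude by constancy of the curve and differentiation
  intro k
  letI : NormedRing (Matrix (Fin 2) (Fin 2) ℂ) := Matrix.linftyOpNormedRing
  letI : NormedAlgebra ℂ (Matrix (Fin 2) (Fin 2) ℂ) := Matrix.linftyOpNormedAlgebra
  letI : NormedAlgebra ℚ (Matrix (Fin 2) (Fin 2) ℂ) :=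
    NormedAlgebra.restrictScalars ℚ ℂ (Matrix (Fin 2) (Fin 2) ℂ)
  have hqcont : Continuous fun t : ℂ => exp (t • X k) :=
    (exp_continuous).comp (continuous_id.smul continuous_const)
  have hqrange : ∀ t : ℂ, exp (t • X k) ∈
      (fun g : Fin n → Matrix (Fin 2) (Fin 2) ℂ => g k) ''
        {g | (∀ i, (g i).det = 1) ∧ prodOp g ψ = ψ} := by
    intro t
    exact ⟨_, hmem t, rfl⟩
  have hconst : ∀ t : ℂ, exp (t • X k) = 1 := by
    intro t
    have := const_of_finite_range hqcont (hfin.image _) hqrange t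
    rwa [zero_smul, exp_zero] at this
  have hd1 : HasDerivAt (fun u : ℂ => exp (u • X k)) (exp ((0 : ℂ) • X k) * X k) 0 :=
    hasDerivAt_exp_smul_const (X k) 0
  have hfun : (fun u : ℂ => exp (u • X k))
      = fun _ : ℂ => (1 : Matrix (Fin 2) (Fin 2) ℂ) := funext hconst
  rw [hfun] at hd1
  have hd2 : HasDerivAt (fun _ : ℂ => (1 : Matrix (Fin 2) (Fin 2) ℂ)) 0 0 :=
    hasDerivAt_const 0 1
  have := hd1.unique hd2
  rwa [zero_smul, exp_zero, one_mul] at this
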